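/- Let α > 2 and c > 0 be real numbers and define f(s) = (c s)^{2/α} γ(1 − 2/α, c s) for s > 0. Then f is differentiable on (0, ∞), and its derivative f′(s) tends to c α/(α − 2) as s → 0⁺. (This is equation (G21) in Appendix C, used to compute the mean received power from the Laplace transform.) -/

import Mathlib

open Real Filter Set MeasureTheory

/-- The lower incomplete gamma function γ(s, x) = ∫_0^x t^(s-1) e^(-t) dt. -/
noncomputable def lowerGamma (s x : ℝ) : ℝ := ∫ t in (0:ℝ)..x, t ^ (s - 1) * Real.exp (-t)

/-- f(s) = (c s)^(2/α) · γ(1 − 2/α, c s). -/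
noncomputable def f (c α s : ℝ) : ℝ := (c * s) ^ (2/α) * lowerGamma (1 - 2/α) (c * s)

lemma lg_intInt {r : ℝ} (hr : -1 < r) (x y : ℝ) :
    IntervalIntegrable (fun t => t ^ r * Real.exp (-t)) volume x y :=
  (intervalIntegral.intervalIntegrable_rpow' hr).mul_continuousOn
    (Continuous.continuousOn (by continuity))

lemma lg_hasDerivAt {s x : ℝ} (hs : 0 < s) (hx : 0 < x) :
    HasDerivAt (lowerGamma s) (x ^ (s - 1) * Real.exp (-x)) x := by
  have hcont : ContinuousOn (fun t : ℝ => t ^ (s - 1) * Real.exp (-t)) (Set.Ioi 0) := by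
    apply ContinuousOn.mul
    · exact fun t ht => (Real.continuousAt_rpow_const t (s-1) (Or.inl (ne_of_gt ht))).continuousWithinAt
    · exact Continuous.continuousOn (by continuity)
  exact intervalIntegral.integral_hasDerivAt_right (lg_intInt (by linarith) 0 x)
    (hcont.stronglyMeasurableAtFilter isOpen_Ioi x hx)
    ((hcont.continuousAt (isOpen_Ioi.mem_nhds hx)))

lemma lg_upper {a x : ℝ} (ha : 0 < a) (ha1 : a < 1) (hx : 0 < x) :
    lowerGamma (1 - a) x ≤ x ^ (1 - a) / (1 - a) := by
  have h1 : lowerGamma (1 - a) x ≤ ∫ t in (0:ℝ)..x, t ^ (-a) := by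
    unfold lowerGamma
    have : (1 : ℝ) - a - 1 = -a := by ring
    rw [this]
    apply intervalIntegral.integral_mono_on hx.le (lg_intInt (by linarith) 0 x)
      (intervalIntegral.intervalIntegrable_rpow' (by linarith))
    intro t ht
    exact mul_le_of_le_one_right (Real.rpow_nonneg ht.1 _)
      (Real.exp_le_one_iff.mpr (by linarith [ht.1]))
  have h2 : ∫ t in (0:ℝ)..x, t ^ (-a) = x ^ (1 - a) / (1 - a) := by
    rw [integral_rpow (Or.inl (by linarith))]
    rw [Real.zero_rpow (by linarith : -a + 1 ≠ 0)]
    norm_num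
    ring_nf
  linarith [h1, h2.symm.le, h2.le]

lemma lg_lower {a x : ℝ} (ha : 0 < a) (ha1 : a < 1) (hx : 0 < x) :
    Real.exp (-x) * (x ^ (1 - a) / (1 - a)) ≤ lowerGamma (1 - a) x := by
  have h1 : (∫ t in (0:ℝ)..x, t ^ (-a) * Real.exp (-x)) ≤ lowerGamma (1 - a) x := by
    unfold lowerGamma
    have : (1 : ℝ) - a - 1 = -a := by ring
    rw [this]
    apply intervalIntegral.integral_mono_on hx.le
      ((intervalIntegral.intervalIntegrable_rpow' (a := 0) (b := x) (by linarith)).mul_const _)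
      (lg_intInt (by linarith) 0 x)
    intro t ht
    exact mul_le_mul_of_nonneg_left (Real.exp_le_exp.mpr (by linarith [ht.2]))
      (Real.rpow_nonneg ht.1 _)
  have h2 : (∫ t in (0:ℝ)..x, t ^ (-a) * Real.exp (-x))
      = (x ^ (1 - a) / (1 - a)) * Real.exp (-x) := by
    rw [intervalIntegral.integral_mul_const, integral_rpow (Or.inl (by linarith))]
    rw [Real.zero_rpow (by linarith : -a + 1 ≠ 0)]
    norm_num
    ring_nf
  rw [mul_comm]
  linarith [h1, h2.le, h2.symm.le]

/-- Key limit: x^(a-1) * γ(1-a, x) → 1/(1-a) as x → 0⁺. -/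
lemma lg_limit {a : ℝ} (ha : 0 < a) (ha1 : a < 1) :
    Tendsto (fun x => x ^ (a - 1) * lowerGamma (1 - a) x) (nhdsWithin 0 (Set.Ioi 0))
      (nhds (1 / (1 - a))) := by
  have key : ∀ x ∈ Set.Ioi (0:ℝ),
      Real.exp (-x) / (1 - a) ≤ x ^ (a - 1) * lowerGamma (1 - a) x ∧
      x ^ (a - 1) * lowerGamma (1 - a) x ≤ 1 / (1 - a) := by
    intro x hx
    have hx : (0:ℝ) < x := hx
    have hpow : x ^ (a - 1) * x ^ (1 - a) = 1 := by
      rw [← Real.rpow_add hx]; norm_num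
    have hpos : (0:ℝ) < x ^ (a - 1) := Real.rpow_pos_of_pos hx _
    constructor
    · have := mul_le_mul_of_nonneg_left (lg_lower ha ha1 hx) hpos.le
      calc Real.exp (-x) / (1 - a)
          = x ^ (a - 1) * (Real.exp (-x) * (x ^ (1 - a) / (1 - a))) := by
            field_simp
            rw [hpow]
        _ ≤ x ^ (a - 1) * lowerGamma (1 - a) x := this
    · have := mul_le_mul_of_nonneg_left (lg_upper ha ha1 hx) hpos.le
      calc x ^ (a - 1) * lowerGamma (1 - a) x
          ≤ x ^ (a - 1) * (x ^ (1 - a) / (1 - a)) := this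
        _ = 1 / (1 - a) := by rw [← mul_div_assoc, hpow]
  have hlo : Tendsto (fun x : ℝ => Real.exp (-x) / (1 - a)) (nhdsWithin 0 (Set.Ioi 0))
      (nhds (1 / (1 - a))) := by
    have : Tendsto (fun x : ℝ => Real.exp (-x) / (1 - a)) (nhds 0) (nhds (1 / (1 - a))) := by
      have : Continuous (fun x : ℝ => Real.exp (-x) / (1 - a)) := by continuity
      simpa using this.tendsto 0
    exact this.mono_left nhdsWithin_le_nhds
  refine tendsto_of_tendsto_of_tendsto_of_le_of_le' hlo tendsto_const_nhds ?_ ?_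
  · exact eventually_nhdsWithin_of_forall (fun x hx => (key x hx).1)
  · exact eventually_nhdsWithin_of_forall (fun x hx => (key x hx).2)

lemma f_hasDerivAt {α c s : ℝ} (hα : 2 < α) (hc : 0 < c) (hs : 0 < s) :
    HasDerivAt (f c α)
      (c * (2/α) * (c*s) ^ (2/α - 1) * lowerGamma (1 - 2/α) (c*s) + c * Real.exp (-(c*s))) s := by
  have hα0 : (0:ℝ) < α := by linarith
  have hcs : 0 < c * s := mul_pos hc hs
  have h1 : HasDerivAt (fun u : ℝ => c * u) c s := by
    simpa using (hasDerivAt_id s).const_mul c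
  have h2 : HasDerivAt (fun x : ℝ => x ^ (2/α)) ((2/α) * (c*s) ^ (2/α - 1)) (c*s) :=
    Real.hasDerivAt_rpow_const (Or.inl hcs.ne')
  have h3 : HasDerivAt (fun u : ℝ => (c*u) ^ (2/α)) ((2/α) * (c*s) ^ (2/α - 1) * c) s :=
    h2.comp s h1
  have h4 : HasDerivAt (lowerGamma (1 - 2/α)) ((c*s) ^ (1 - 2/α - 1) * Real.exp (-(c*s))) (c*s) :=
    lg_hasDerivAt (sub_pos.mpr (by rw [div_lt_one hα0]; linarith)) hcs
  have h5 : HasDerivAt (fun u : ℝ => lowerGamma (1 - 2/α) (c*u))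
      ((c*s) ^ (1 - 2/α - 1) * Real.exp (-(c*s)) * c) s := h4.comp s h1
  have h6 := h3.mul h5
  have heq : (2/α) * (c*s) ^ (2/α - 1) * c * lowerGamma (1 - 2/α) (c*s)
      + (c*s) ^ (2/α) * ((c*s) ^ (1 - 2/α - 1) * Real.exp (-(c*s)) * c)
      = c * (2/α) * (c*s) ^ (2/α - 1) * lowerGamma (1 - 2/α) (c*s) + c * Real.exp (-(c*s)) := by
    have hpow : (c*s) ^ (2/α) * (c*s) ^ (1 - 2/α - 1) = 1 := by
      rw [← Real.rpow_add hcs]; norm_num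
    calc (2/α) * (c*s) ^ (2/α - 1) * c * lowerGamma (1 - 2/α) (c*s)
        + (c*s) ^ (2/α) * ((c*s) ^ (1 - 2/α - 1) * Real.exp (-(c*s)) * c)
        = c * (2/α) * (c*s) ^ (2/α - 1) * lowerGamma (1 - 2/α) (c*s)
          + ((c*s) ^ (2/α) * (c*s) ^ (1 - 2/α - 1)) * Real.exp (-(c*s)) * c := by ring
      _ = _ := by rw [hpow]; ring
  rw [← heq]
  exact h6

theorem stmt_3 (α c : ℝ) (hα : 2 < α) (hc : 0 < c) :
    (∀ s ∈ Set.Ioi (0:ℝ), DifferentiableAt ℝ (f c α) s) ∧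
    Filter.Tendsto (deriv (f c α)) (nhdsWithin 0 (Set.Ioi 0))
      (nhds (c * α / (α - 2))) := by
  have hα0 : (0:ℝ) < α := by linarith
  have ha : (0:ℝ) < 2/α := by positivity
  have ha1 : 2/α < 1 := by rw [div_lt_one hα0]; linarith
  constructor
  · exact fun s hs => (f_hasDerivAt hα hc hs).differentiableAt
  · have hEq : ∀ s ∈ Set.Ioi (0:ℝ), deriv (f c α) s
        = c * (2/α) * (c*s) ^ (2/α - 1) * lowerGamma (1 - 2/α) (c*s) + c * Real.exp (-(c*s)) :=
      fun s hs => (f_hasDerivAt hα hc hs).deriv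
    have hmap : Tendsto (fun s : ℝ => c * s) (nhdsWithin 0 (Set.Ioi 0))
        (nhdsWithin 0 (Set.Ioi 0)) := by
      apply tendsto_nhdsWithin_of_tendsto_nhds_of_eventually_within
      · have : Tendsto (fun s : ℝ => c * s) (nhds 0) (nhds (c * 0)) :=
          (continuous_const.mul continuous_id).tendsto 0
        simpa using this.mono_left nhdsWithin_le_nhds
      · exact eventually_nhdsWithin_of_forall (fun s hs => mul_pos hc hs)
    have hlim1 : Tendsto (fun s : ℝ => (c*s) ^ (2/α - 1) * lowerGamma (1 - 2/α) (c*s))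
        (nhdsWithin 0 (Set.Ioi 0)) (nhds (1 / (1 - 2/α))) :=
      (lg_limit ha ha1).comp hmap
    have hlim2 : Tendsto (fun s : ℝ => Real.exp (-(c*s))) (nhdsWithin 0 (Set.Ioi 0)) (nhds 1) := by
      have : Tendsto (fun s : ℝ => Real.exp (-(c*s))) (nhds 0) (nhds 1) := by
        have hcont : Continuous (fun s : ℝ => Real.exp (-(c*s))) := by continuity
        simpa using hcont.tendsto 0
      exact this.mono_left nhdsWithin_le_nhds
    have hlim : Tendsto
        (fun s : ℝ => c * (2/α) * ((c*s) ^ (2/α - 1) * lowerGamma (1 - 2/α) (c*s)) + c * Real.exp (-(c*s)))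
        (nhdsWithin 0 (Set.Ioi 0)) (nhds (c * (2/α) * (1 / (1 - 2/α)) + c * 1)) :=
      ((tendsto_const_nhds.mul hlim1).add (tendsto_const_nhds.mul hlim2))
    have hval : c * (2/α) * (1 / (1 - 2/α)) + c * 1 = c * α / (α - 2) := by
      have h2 : α - 2 ≠ 0 := by linarith
      have h3 : α ≠ 0 := by linarith
      have h4 : 1 - 2/α = (α - 2)/α := by field_simp
      rw [h4]
      field_simp
      ring
    rw [hval] at hlim
    apply hlim.congr'
    filter_upwards [eventually_nhdsWithin_of_forall hEq] with s hs
    rw [hs]; ring
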